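/- Assume the fundamental unit ε of F does not generate F (i.e., ℚ(ε) ≠ F) and 1 < |σ(ε)| < 1 + √2. Then ℚ(ε) is a real quadratic subfield of F isomorphic to ℚ(√5), one has |σ(ε)| = (1+√5)/2, and O_F contains no element x with N(x) = 2 or N(x) = 3. -/

import Mathlib

open NumberField nonZeroDivisors MeasureTheory

noncomputable section

/-- `‖ux‖² = 2u₁²|σ(x)|² + 2u₂²|σ'(x)|²` for `u = (u₁, u₂)`. -/
def normSq2 {F : Type*} [Field F] (σ σ' : F →+* ℂ) (u₁ u₂ : ℝ) (x : F) : ℝ :=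
  2 * u₁ ^ 2 * ‖σ x‖ ^ 2 + 2 * u₂ ^ 2 * ‖σ' x‖ ^ 2

/-- `N(x) = |σ(x)|²·|σ'(x)|²`, the absolute value of the norm of `x`. -/
def absN {F : Type*} [Field F] (σ σ' : F →+* ℂ) (x : F) : ℝ :=
  ‖σ x‖ ^ 2 * ‖σ' x‖ ^ 2

/-- `ε` is a fundamental unit: every unit is `ζ · εᵏ` with `ζ` a root of unity. -/
def IsFundamentalUnit {F : Type*} [Field F] [NumberField F] (ε : (𝓞 F)ˣ) : Prop :=
  ∀ u : (𝓞 F)ˣ, ∃ (ζ : (𝓞 F)ˣ) (k : ℤ), (∃ n : ℕ, 0 < n ∧ ζ ^ n = 1) ∧ u = ζ * ε ^ k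

section AuxHelpers
open Polynomial NumberField


lemma aux_monic_eq_of_dvd {K : Type*} [Field K] {p q : K[X]} (hp : p.Monic) (hq : q.Monic)
    (hdvd : p ∣ q) (hdeg : p.natDegree = q.natDegree) : p = q := by
  obtain ⟨c, rfl⟩ := hdvd
  have hc : c ≠ 0 := by
    rintro rfl
    simp only [mul_zero] at hq
    exact (by simpa using hq.ne_zero)
  have hmul := natDegree_mul hp.ne_zero hc
  have hc0 : c.natDegree = 0 := by omega
  obtain ⟨x, rfl⟩ := Polynomial.natDegree_eq_zero.mp hc0
  have hx : x = 1 := by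
    have := hq.leadingCoeff
    rwa [leadingCoeff_mul, hp.leadingCoeff, one_mul, leadingCoeff_C] at this
  rw [hx, map_one, mul_one]

lemma aux_monic_two {K : Type*} [Field K] {p : K[X]} (hp : p.Monic) (h2 : p.natDegree = 2) :
    p = X ^ 2 + C (p.coeff 1) * X + C (p.coeff 0) := by
  ext n
  match n with
  | 0 => simp
  | 1 => simp [coeff_X, coeff_C]
  | 2 =>
    have := hp.coeff_natDegree
    rw [h2] at this
    simp [this, coeff_C]
  | (n+3) =>
    rw [Polynomial.coeff_eq_zero_of_natDegree_lt (by omega)]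
    simp [coeff_X_pow, coeff_C, coeff_X]

lemma aux_rat_sq_ne_five (r : ℚ) : r ^ 2 ≠ 5 := by
  intro h
  have h5 : Irrational (Real.sqrt 5) := (by norm_num : Nat.Prime 5).irrational_sqrt
  have : ((r:ℝ)) ^ 2 = 5 := by exact_mod_cast congrArg (fun q : ℚ => (q : ℝ)) h
  have habs : Real.sqrt 5 = |(r : ℝ)| := by
    rw [← this, Real.sqrt_sq_eq_abs]
  rw [habs] at h5
  exact h5 ⟨|r|, by push_cast; rfl⟩

private lemma r_up {s : ℝ} (h1 : 1 < s) (h2 : s < 1 + Real.sqrt 2) : s ^ 2 + 1 < 3 * s := by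
  have hsqrt2 : Real.sqrt 2 ^ 2 = 2 := Real.sq_sqrt (by norm_num)
  nlinarith [mul_pos (by linarith : (0:ℝ) < s - 1) (by linarith : (0:ℝ) < 1 + Real.sqrt 2 - s),
    Real.sqrt_nonneg 2]

private lemma r_up2 {s : ℝ} (h1 : 1 < s) (h2 : s < 1 + Real.sqrt 2) : s ^ 2 - 1 < 2 * s := by
  have hsqrt2 : Real.sqrt 2 ^ 2 = 2 := Real.sq_sqrt (by norm_num)
  nlinarith [mul_pos (by linarith : (0:ℝ) < s - 1) (by linarith : (0:ℝ) < 1 + Real.sqrt 2 - s),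
    Real.sqrt_nonneg 2]

private lemma r_gold {s : ℝ} (h1 : 1 < s) (hseq : s ^ 2 - s - 1 = 0) :
    s = (1 + Real.sqrt 5) / 2 := by
  have h5s : Real.sqrt 5 ^ 2 = 5 := Real.sq_sqrt (by norm_num)
  have hfac : (s - (1 + Real.sqrt 5) / 2) * (s + (Real.sqrt 5 - 1) / 2) = 0 := by
    linear_combination hseq - (1/4) * h5s
  rcases mul_eq_zero.mp hfac with h | h
  · linarith
  · nlinarith [Real.sqrt_nonneg 5]

set_option maxHeartbeats 1000000 in
lemma aux_quadratic_unit {t : ℂ} {a b : ℤ}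
    (heq : t ^ 2 + (a : ℂ) * t + (b : ℂ) = 0)
    (hb : b = 1 ∨ b = -1)
    (h1 : 1 < ‖t‖) (h2 : ‖t‖ < 1 + Real.sqrt 2) :
    b = -1 ∧ (a = 1 ∨ a = -1) ∧ ‖t‖ = (1 + Real.sqrt 5) / 2 := by
  set x := t.re with hx
  set y := t.im with hy
  have hre : x ^ 2 - y ^ 2 + (a:ℝ) * x + (b:ℝ) = 0 := by
    have := congrArg Complex.re heq
    simp [Complex.add_re, pow_two, Complex.mul_re, Complex.mul_im] at this
    push_cast at this ⊢
    nlinarith [this]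
  have him : y * (2 * x + (a:ℝ)) = 0 := by
    have := congrArg Complex.im heq
    simp [Complex.add_im, pow_two, Complex.mul_re, Complex.mul_im] at this
    push_cast at this ⊢
    nlinarith [this]
  have habs2 : ‖t‖ ^ 2 = x ^ 2 + y ^ 2 := by
    rw [Complex.sq_norm, Complex.normSq_apply]; ring
  -- t is real
  have hy0 : y = 0 := by
    by_contra hy0
    have h2x : 2 * x + (a:ℝ) = 0 := by
      rcases mul_eq_zero.mp him with h | h
      · exact absurd h hy0
      · exact h
    have hax : (2 * x + (a:ℝ)) * x = 0 := by rw [h2x]; ring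
    have hb2 : ‖t‖ ^ 2 = (b:ℝ) := by
      rw [habs2]; nlinarith [hre, hax]
    rcases hb with rfl | rfl
    · push_cast at hb2; nlinarith [h1, norm_nonneg t]
    · push_cast at hb2; nlinarith [sq_nonneg (‖t‖)]
  have hreq : x ^ 2 + (a:ℝ) * x + (b:ℝ) = 0 := by
    rw [hy0] at hre; nlinarith [hre]
  have habsx : ‖t‖ = |x| := by
    have ht : t = (x : ℂ) := Complex.ext rfl (by simpa using hy0)
    rw [ht, Complex.norm_real, Real.norm_eq_abs]
  set s := ‖t‖ with hs
  have hs1 : 1 < s := h1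
  have hs0 : 0 < s := by linarith
  have hsx : s ^ 2 = x ^ 2 := by rw [habsx, sq_abs]
  rcases hb with rfl | rfl
  · -- case b = 1 : contradiction
    exfalso
    have hax : (a:ℝ) * x = -(x ^ 2 + 1) := by push_cast at hreq; linarith
    have h5 : |(a:ℝ)| * s = s ^ 2 + 1 := by
      rw [habsx, ← abs_mul, hax, abs_neg, abs_of_pos (by nlinarith)]
      nlinarith [hsx]
    have hub : s ^ 2 + 1 < 3 * s := r_up hs1 h2
    have hlb : 2 * s < s ^ 2 + 1 := by nlinarith [sq_nonneg (s - 1)]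
    have ha2 : (2:ℝ) < |(a:ℝ)| := by nlinarith
    have ha3 : |(a:ℝ)| < 3 := by nlinarith
    rw [← Int.cast_abs] at ha2 ha3
    have ha2' : (2:ℤ) < |a| := by exact_mod_cast ha2
    have ha3' : |a| < 3 := by exact_mod_cast ha3
    omega
  · -- case b = -1
    have hax : (a:ℝ) * x = -(x ^ 2 - 1) := by push_cast at hreq; linarith
    have h5 : |(a:ℝ)| * s = s ^ 2 - 1 := by
      rw [habsx, ← abs_mul, hax, abs_neg, abs_of_pos (by nlinarith)]
      nlinarith [hsx]
    have hub : s ^ 2 - 1 < 2 * s := r_up2 hs1 h2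
    have hlb : 0 < s ^ 2 - 1 := by nlinarith
    have ha2 : |(a:ℝ)| < 2 := by nlinarith
    have ha0 : 0 < |(a:ℝ)| := by
      rcases (abs_nonneg ((a:ℝ))).lt_or_eq with h | h
      · exact h
      · exfalso; nlinarith [h.symm]
    rw [← Int.cast_abs] at ha2 ha0
    have ha2' : (|a| : ℤ) < 2 := by exact_mod_cast ha2
    have ha0' : (0:ℤ) < |a| := by exact_mod_cast ha0
    have ha2'' := abs_lt.mp ha2'
    have ha0'' : a ≠ 0 := abs_pos.mp ha0'
    have ha1 : a = 1 ∨ a = -1 := by omega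
    have haR : |(a:ℝ)| = 1 := by rcases ha1 with rfl | rfl <;> norm_num
    have hseq : s ^ 2 - s - 1 = 0 := by rw [haR] at h5; nlinarith
    exact ⟨rfl, ha1, r_gold hs1 hseq⟩


lemma aux_absnorm {F : Type*} [Field F] [NumberField F]
    (h4 : Module.finrank ℚ F = 4)
    (hcx : ∀ φ : F →+* ℂ, ¬ComplexEmbedding.IsReal φ)
    {σ σ' : F →+* ℂ} (hne : InfinitePlace.mk σ ≠ InfinitePlace.mk σ') (x : F) :
    ‖σ x‖ ^ 2 * ‖σ' x‖ ^ 2 = |(Algebra.norm ℚ x : ℚ)| := by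
  classical
  have hmult : ∀ w : InfinitePlace F, w.mult = 2 := by
    intro w
    rw [InfinitePlace.mult, if_neg]
    exact fun h => hcx _ (InfinitePlace.isReal_iff.mp h)
  have hsum := InfinitePlace.sum_mult_eq (K := F)
  rw [h4] at hsum
  have hcard : Fintype.card (InfinitePlace F) = 2 := by
    rw [Finset.sum_congr rfl (fun w _ => hmult w), Finset.sum_const, smul_eq_mul] at hsum
    have h : Fintype.card (InfinitePlace F) * 2 = 4 := hsum
    omega
  have huniv : (Finset.univ : Finset (InfinitePlace F)) =
      {InfinitePlace.mk σ, InfinitePlace.mk σ'} := by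
    symm
    apply Finset.eq_univ_of_card
    rw [Finset.card_pair hne, hcard]
  have hprod := InfinitePlace.prod_eq_abs_norm (K := F) x
  rw [huniv, Finset.prod_pair hne, hmult, hmult] at hprod
  have h1 : (InfinitePlace.mk σ) x = ‖σ x‖ := rfl
  have h2 : (InfinitePlace.mk σ') x = ‖σ' x‖ := rfl
  rw [h1, h2] at hprod
  exact_mod_cast hprod

lemma aux_rat_sq_ne_five' (r : ℚ) : r ^ 2 ≠ 5 := by
  intro h
  have h5 : Irrational (Real.sqrt 5) := (by norm_num : Nat.Prime 5).irrational_sqrt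
  have : ((r:ℝ)) ^ 2 = 5 := by exact_mod_cast congrArg (fun q : ℚ => (q : ℝ)) h
  have habs : Real.sqrt 5 = |(r : ℝ)| := by rw [← this, Real.sqrt_sq_eq_abs]
  rw [habs] at h5
  exact h5 ⟨|r|, by push_cast; rfl⟩

lemma aux_norm_form {L : Type*} [Field L] [Algebra ℚ L] [FiniteDimensional ℚ L]
    (h2 : Module.finrank ℚ L = 2) {d : L} (hd : d ^ 2 = 5)
    (hdint : IsIntegral ℤ d) {y : L} (hy : IsIntegral ℤ y) {m : ℤ}
    (hm : ((m : ℚ) : L) = algebraMap ℚ L (Algebra.norm ℚ y)) :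
    ∃ u v : ℤ, v ^ 2 = 5 * (u ^ 2 - 4 * m) := by
  classical
  have hinj : Function.Injective (algebraMap ℚ L) := (algebraMap ℚ L).injective
  have hdd : d * d = algebraMap ℚ L 5 := by
    rw [← pow_two, hd]; simp
  -- basis {1, d}
  have hli : LinearIndependent ℚ ![(1 : L), d] := by
    rw [LinearIndependent.pair_iff]
    intro s t hst
    by_cases ht : t = 0
    · subst ht
      have hz : algebraMap ℚ L s = 0 := by simpa [Algebra.smul_def] using hst
      exact ⟨hinj (by simpa using hz), rfl⟩
    · exfalso
      have htL : algebraMap ℚ L t ≠ 0 := fun h => ht (hinj (by simpa using h))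
      have hst' : algebraMap ℚ L s + algebraMap ℚ L t * d = 0 := by
        simpa [Algebra.smul_def] using hst
      have hdq : d = -(algebraMap ℚ L s) / (algebraMap ℚ L t) := by
        rw [eq_div_iff htL]; linear_combination hst'
      apply aux_rat_sq_ne_five' (-(s/t))
      apply hinj
      rw [map_pow, map_neg, map_div₀, ← neg_div, ← hdq, hd]
      simp
  have hcardeq : Fintype.card (Fin 2) = Module.finrank ℚ L := by simp [h2]
  let B : Module.Basis (Fin 2) ℚ L := basisOfLinearIndependentOfCardEqFinrank hli hcardeq
  have hB0 : B 0 = 1 := by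
    simp [B, coe_basisOfLinearIndependentOfCardEqFinrank]
  have hB1 : B 1 = d := by
    simp [B, coe_basisOfLinearIndependentOfCardEqFinrank]
  set c0 := B.repr y 0 with hc0
  set c1 := B.repr y 1 with hc1
  have hyrep : y = algebraMap ℚ L c0 + algebraMap ℚ L c1 * d := by
    have h := B.sum_repr y
    rw [Fin.sum_univ_two, hB0, hB1] at h
    rw [← h, ← hc0, ← hc1]
    simp [Algebra.smul_def]
  -- repr of an explicit combination
  have hrepr : ∀ (s t : ℚ), (B.repr (algebraMap ℚ L s + algebraMap ℚ L t * d) 0 = s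
      ∧ B.repr (algebraMap ℚ L s + algebraMap ℚ L t * d) 1 = t) := by
    intro s t
    have hz : algebraMap ℚ L s + algebraMap ℚ L t * d = s • B 0 + t • B 1 := by
      rw [hB0, hB1]; simp [Algebra.smul_def]
    rw [hz]
    simp [Finsupp.single_apply]
  -- products
  have hyd : y * d = algebraMap ℚ L (5 * c1) + algebraMap ℚ L c0 * d := by
    rw [hyrep, map_mul]
    linear_combination (algebraMap ℚ L c1) * hdd
  have hydd : (d * y) * d = algebraMap ℚ L (5 * c0) + algebraMap ℚ L (5 * c1) * d := by
    rw [hyrep, map_mul, map_mul]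
    linear_combination (algebraMap ℚ L c0 + algebraMap ℚ L c1 * d) * hdd
  -- matrix entries for y
  have e00 : Algebra.leftMulMatrix B y 0 0 = c0 := by
    rw [Algebra.leftMulMatrix_eq_repr_mul, hB0, mul_one]
  have e10 : Algebra.leftMulMatrix B y 1 0 = c1 := by
    rw [Algebra.leftMulMatrix_eq_repr_mul, hB0, mul_one]
  have e01 : Algebra.leftMulMatrix B y 0 1 = 5 * c1 := by
    rw [Algebra.leftMulMatrix_eq_repr_mul, hB1, hyd]
    exact (hrepr (5 * c1) c0).1
  have e11 : Algebra.leftMulMatrix B y 1 1 = c0 := by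
    rw [Algebra.leftMulMatrix_eq_repr_mul, hB1, hyd]
    exact (hrepr (5 * c1) c0).2
  -- norm
  have hnorm : Algebra.norm ℚ y = c0 ^ 2 - 5 * c1 ^ 2 := by
    rw [Algebra.norm_eq_matrix_det B y, Matrix.det_fin_two, e00, e01, e10, e11]
    ring
  -- trace of y
  have htr : Algebra.trace ℚ L y = 2 * c0 := by
    rw [Algebra.trace_eq_matrix_trace B y, Matrix.trace_fin_two, e00, e11]
    ring
  -- trace of d * y
  have f00 : Algebra.leftMulMatrix B (d * y) 0 0 = 5 * c1 := by
    rw [Algebra.leftMulMatrix_eq_repr_mul, hB0, mul_one, mul_comm d y, hyd]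
    exact (hrepr (5 * c1) c0).1
  have f11 : Algebra.leftMulMatrix B (d * y) 1 1 = 5 * c1 := by
    rw [Algebra.leftMulMatrix_eq_repr_mul, hB1, hydd]
    exact (hrepr (5 * c0) (5 * c1)).2
  have htr' : Algebra.trace ℚ L (d * y) = 10 * c1 := by
    rw [Algebra.trace_eq_matrix_trace B (d * y), Matrix.trace_fin_two, f00, f11]
    ring
  -- integrality
  obtain ⟨u, hu⟩ := IsIntegrallyClosed.isIntegral_iff.mp
    (Algebra.isIntegral_trace (R := ℤ) (L := ℚ) (F := L) hy)
  obtain ⟨v, hv⟩ := IsIntegrallyClosed.isIntegral_iff.mp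
    (Algebra.isIntegral_trace (R := ℤ) (L := ℚ) (F := L) (hdint.mul hy))
  have hmq : (m : ℚ) = c0 ^ 2 - 5 * c1 ^ 2 := by
    rw [← hnorm]
    apply hinj
    rw [eq_ratCast (algebraMap ℚ L) ((m : ℚ))]
    exact hm
  have huq : (u : ℚ) = 2 * c0 := by
    have : algebraMap ℤ ℚ u = 2 * c0 := by rw [hu, htr]
    exact_mod_cast this
  have hvq : (v : ℚ) = 10 * c1 := by
    have : algebraMap ℤ ℚ v = 10 * c1 := by rw [hv, htr']
    exact_mod_cast this
  refine ⟨u, v, ?_⟩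
  have : (v : ℚ) ^ 2 = 5 * ((u : ℚ) ^ 2 - 4 * (m : ℚ)) := by
    rw [huq, hvq, hmq]; ring
  exact_mod_cast this

lemma aux_no23 {u v m : ℤ} (h : v ^ 2 = 5 * (u ^ 2 - 4 * m))
    (hm : m = 2 ∨ m = -2 ∨ m = 3 ∨ m = -3) : False := by
  have hp : Prime (5 : ℤ) := by norm_num
  have hdvd : (5:ℤ) ∣ v := hp.dvd_of_dvd_pow (Dvd.intro _ h.symm)
  obtain ⟨w, rfl⟩ := hdvd
  have h2 : u ^ 2 - 4 * m = 5 * w ^ 2 := by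
    have h5 : (5:ℤ) * (u ^ 2 - 4 * m) = 5 * (5 * w ^ 2) := by linear_combination -h
    exact mul_left_cancel₀ (by norm_num) h5
  have hz : ((u : ZMod 5)) ^ 2 = 4 * ((m : ℤ) : ZMod 5) := by
    have := congrArg (fun z : ℤ => (z : ZMod 5)) h2
    push_cast at this
    have h50 : (5 : ZMod 5) = 0 := by decide
    linear_combination this + ((w : ZMod 5)) ^ 2 * h50
  have key : ∀ (c : ZMod 5), (c = 3 ∨ c = 2) → ∀ z : ZMod 5, z ^ 2 ≠ c := by decide
  rcases hm with rfl | rfl | rfl | rfl <;> (push_cast at hz; exact key _ (by decide) _ hz)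


end AuxHelpers

set_option maxHeartbeats 2000000 in
theorem stmt16
    (F K : Type*) [Field F] [NumberField F] [Field K] [NumberField K]
    [Algebra K F] [IsScalarTower ℚ K F]
    (hquartic : Module.finrank ℚ F = 4)
    (hquad : Module.finrank K F = 2)
    (hKim : ∀ φ : K →+* ℂ, ∃ x, (φ x).im ≠ 0)
    (σ σ' : F →+* ℂ)
    (hplaces : InfinitePlace.mk σ ≠ InfinitePlace.mk σ')
    (ε : (𝓞 F)ˣ) (hfund : IsFundamentalUnit ε)
    (hgen : IntermediateField.adjoin ℚ {((ε : 𝓞 F) : F)} ≠ ⊤)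
    (hε1 : 1 < ‖σ ((ε : 𝓞 F) : F)‖)
    (hε2 : ‖σ ((ε : 𝓞 F) : F)‖ < 1 + Real.sqrt 2) :
    Module.finrank ℚ (IntermediateField.adjoin ℚ {((ε : 𝓞 F) : F)}) = 2 ∧
      Nonempty ((IntermediateField.adjoin ℚ {((ε : 𝓞 F) : F)}) ≃ₐ[ℚ]
        (IntermediateField.adjoin ℚ {Real.sqrt 5})) ∧
      ‖σ ((ε : 𝓞 F) : F)‖ = (1 + Real.sqrt 5) / 2 ∧
      ∀ x : 𝓞 F, absN σ σ' (x : F) ≠ 2 ∧ absN σ σ' (x : F) ≠ 3 := by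
  classical
  set εF : F := ((ε : 𝓞 F) : F) with hεF
  set L : IntermediateField ℚ F := IntermediateField.adjoin ℚ {εF} with hL
  -- basic facts
  have hεint : IsIntegral ℤ εF := (ε : 𝓞 F).isIntegral_coe
  have hεQint : IsIntegral ℚ εF := IsIntegral.of_finite ℚ εF
  have hε0 : εF ≠ 0 := by
    intro h
    rw [h, map_zero] at hε1
    simp at hε1
    linarith
  -- the inverse
  set η : F := (((ε⁻¹ : (𝓞 F)ˣ) : 𝓞 F) : F) with hη
  have hinv : εF * η = 1 := by
    have h1 : (ε : 𝓞 F) * ((ε⁻¹ : (𝓞 F)ˣ) : 𝓞 F) = 1 := by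
      rw [← Units.val_mul, mul_inv_cancel, Units.val_one]
    calc εF * η = (((ε : 𝓞 F) * ((ε⁻¹ : (𝓞 F)ˣ) : 𝓞 F) : 𝓞 F) : F) := by push_cast; ring
    _ = 1 := by rw [h1]; push_cast; ring
  have hηint : IsIntegral ℤ η := ((ε⁻¹ : (𝓞 F)ˣ) : 𝓞 F).isIntegral_coe
  have hηQint : IsIntegral ℚ η := IsIntegral.of_finite ℚ η
  have hη0 : η ≠ 0 := by
    intro h; rw [h, mul_zero] at hinv; exact zero_ne_one hinv
  have hηinv : η = εF⁻¹ := by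
    field_simp
    linear_combination hinv
  -- εF is irrational
  have hirr : ∀ r : ℚ, εF ≠ algebraMap ℚ F r := by
    intro r hr
    have hrint : IsIntegral ℤ r := by
      rw [← isIntegral_algebraMap_iff (algebraMap ℚ F).injective, ← hr]; exact hεint
    obtain ⟨rz, hrz⟩ := IsIntegrallyClosed.isIntegral_iff.mp hrint
    have hr0 : r ≠ 0 := by
      intro h; rw [h, map_zero] at hr; exact hε0 hr
    have hrinv : η = algebraMap ℚ F r⁻¹ := by
      rw [hηinv, hr, ← map_inv₀]
    have hrinvint : IsIntegral ℤ (r⁻¹ : ℚ) := by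
      rw [← isIntegral_algebraMap_iff (algebraMap ℚ F).injective, ← hrinv]; exact hηint
    obtain ⟨sz, hsz⟩ := IsIntegrallyClosed.isIntegral_iff.mp hrinvint
    have hmul : (rz : ℚ) * (sz : ℚ) = 1 := by
      rw [show ((rz:ℤ):ℚ) = algebraMap ℤ ℚ rz from rfl, show ((sz:ℤ):ℚ) = algebraMap ℤ ℚ sz from rfl,
        hrz, hsz, mul_inv_cancel₀ hr0]
    have hmulz : rz * sz = 1 := by exact_mod_cast hmul
    have hrz1 : rz = 1 ∨ rz = -1 := Int.eq_one_or_neg_one_of_mul_eq_one hmulz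
    have habs : ‖σ εF‖ = 1 := by
      rw [hr, ← hrz]
      rcases hrz1 with rfl | rfl <;> simp
    rw [habs] at hε1; linarith
  -- degree of L over ℚ is 2
  have hLne : L ≠ ⊥ := by
    intro h
    have : εF ∈ L := IntermediateField.mem_adjoin_simple_self ℚ εF
    rw [h, IntermediateField.mem_bot] at this
    obtain ⟨r, hr⟩ := this
    exact hirr r hr.symm
  have hn1 : Module.finrank ℚ L ≠ 1 := fun h => hLne (IntermediateField.finrank_eq_one_iff.mp h)
  have hm1 : Module.finrank L F ≠ 1 := by
    intro h
    apply hgen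
    have hbot : (⊥ : Subalgebra L F) = ⊤ := Subalgebra.bot_eq_top_of_finrank_eq_one h
    apply IntermediateField.toSubalgebra_injective
    rw [IntermediateField.top_toSubalgebra]
    apply Subalgebra.toSubmodule.injective
    apply Submodule.eq_top_of_finrank_eq
    rw [Subalgebra.finrank_toSubmodule]
    show Module.finrank ℚ L = Module.finrank ℚ F
    have hmul : Module.finrank ℚ L * Module.finrank L F = 4 := by
      rw [Module.finrank_mul_finrank]; exact hquartic
    rw [h, mul_one] at hmul
    rw [hmul, hquartic]
  have hmul : Module.finrank ℚ L * Module.finrank L F = 4 := by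
    rw [Module.finrank_mul_finrank]; exact hquartic
  have hd2 : Module.finrank ℚ L = 2 := by
    have hle : Module.finrank ℚ L ≤ 4 := Nat.le_of_dvd (by norm_num) ⟨_, hmul.symm⟩
    set n := Module.finrank ℚ L with hn
    set m := Module.finrank L F with hm
    interval_cases n <;> omega
  -- minimal polynomial of εF
  set P : Polynomial ℚ := minpoly ℚ εF with hP
  have hPmon : P.Monic := minpoly.monic hεQint
  have hPdeg : P.natDegree = 2 := by
    rw [hP, ← IntermediateField.adjoin.finrank hεQint]
    exact hd2
  have hPint : P = (minpoly ℤ εF).map (algebraMap ℤ ℚ) :=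
    minpoly.isIntegrallyClosed_eq_field_fractions' ℚ hεint
  set aZ : ℤ := (minpoly ℤ εF).coeff 1 with haZ
  set bZ : ℤ := (minpoly ℤ εF).coeff 0 with hbZ
  have haQ : P.coeff 1 = (aZ : ℚ) := by rw [hPint, Polynomial.coeff_map]; rfl
  have hbQ : P.coeff 0 = (bZ : ℚ) := by rw [hPint, Polynomial.coeff_map]; rfl
  have hrel : εF ^ 2 + (aZ : F) * εF + (bZ : F) = 0 := by
    have h0 := minpoly.aeval ℚ εF
    rw [← hP, aux_monic_two hPmon hPdeg, haQ, hbQ] at h0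
    simp only [map_add, map_mul, map_pow, Polynomial.aeval_X, Polynomial.aeval_C,
      eq_ratCast] at h0
    push_cast at h0
    exact h0
  have hb0 : (bZ : ℚ) ≠ 0 := by
    rw [← hbQ]; exact minpoly.coeff_zero_ne_zero hεQint hε0
  -- b = ±1 via the inverse unit
  have hbZ1 : bZ = 1 ∨ bZ = -1 := by
    have hLη : IntermediateField.adjoin ℚ {η} = L := by
      apply le_antisymm
      · rw [IntermediateField.adjoin_le_iff, Set.singleton_subset_iff]
        rw [hηinv]
        exact L.inv_mem (IntermediateField.mem_adjoin_simple_self ℚ εF)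
      · rw [hL, IntermediateField.adjoin_le_iff, Set.singleton_subset_iff]
        have : εF = η⁻¹ := by rw [hηinv, inv_inv]
        rw [this]
        exact (IntermediateField.adjoin ℚ {η}).inv_mem
          (IntermediateField.mem_adjoin_simple_self ℚ η)
    have hQdeg : (minpoly ℚ η).natDegree = 2 := by
      rw [← IntermediateField.adjoin.finrank hηQint]
      have : (IntermediateField.adjoin ℚ {η} : IntermediateField ℚ F) = L := hLη
      rw [this]
      exact hd2
    set R : Polynomial ℚ := Polynomial.X ^ 2 + Polynomial.C ((aZ : ℚ)/(bZ : ℚ)) * Polynomial.X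
      + Polynomial.C (1/(bZ : ℚ)) with hR
    have hRdeg : R.degree = 2 := by
      rw [hR, add_assoc]
      rw [Polynomial.degree_add_eq_left_of_degree_lt]
      · exact Polynomial.degree_X_pow 2
      · rw [Polynomial.degree_X_pow]
        exact lt_of_le_of_lt Polynomial.degree_linear_le (by norm_num)
    have hRmon : R.Monic := by
      rw [Polynomial.Monic, Polynomial.leadingCoeff, Polynomial.natDegree_eq_of_degree_eq_some hRdeg]
      rw [hR]
      simp [Polynomial.coeff_X, Polynomial.coeff_C]
    have hRnd : R.natDegree = 2 := Polynomial.natDegree_eq_of_degree_eq_some hRdeg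
    have hbF : (bZ : F) ≠ 0 := by
      exact_mod_cast (Int.cast_ne_zero (α := F)).mpr (by exact_mod_cast hb0)
    have key : (bZ : F) * η ^ 2 + (aZ : F) * η + 1 = 0 := by
      linear_combination η ^ 2 * hrel - (εF * η + 1 + (aZ : F) * η) * hinv
    have hRroot : Polynomial.aeval η R = 0 := by
      have hcalc : Polynomial.aeval η R =
          ((bZ : F))⁻¹ * ((bZ : F) * η ^ 2 + (aZ : F) * η + 1) := by
        rw [hR]
        simp only [map_add, map_mul, map_pow, Polynomial.aeval_X, Polynomial.aeval_C, eq_ratCast]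
        push_cast
        field_simp
      rw [hcalc, key, mul_zero]
    have hQR : minpoly ℚ η = R :=
      aux_monic_eq_of_dvd (minpoly.monic hηQint) hRmon (minpoly.dvd ℚ η hRroot)
        (hQdeg.trans hRnd.symm)
    have hQint : minpoly ℚ η = (minpoly ℤ η).map (algebraMap ℤ ℚ) :=
      minpoly.isIntegrallyClosed_eq_field_fractions' ℚ hηint
    set cZ : ℤ := (minpoly ℤ η).coeff 0 with hcZ
    have hcQ : ((cZ : ℚ)) = 1/(bZ : ℚ) := by
      have h1 : (minpoly ℚ η).coeff 0 = (cZ : ℚ) := by rw [hQint, Polynomial.coeff_map]; rfl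
      have h2 : (minpoly ℚ η).coeff 0 = 1/(bZ : ℚ) := by
        rw [hQR, hR]
        simp [Polynomial.coeff_X, Polynomial.coeff_C]
      rw [← h1, h2]
    have hmulbc : bZ * cZ = 1 := by
      have : (bZ : ℚ) * (cZ : ℚ) = 1 := by
        rw [hcQ]; field_simp
      exact_mod_cast this
    exact Int.eq_one_or_neg_one_of_mul_eq_one hmulbc
  -- complex embedding equation
  have hceq : (σ εF) ^ 2 + (aZ : ℂ) * (σ εF) + (bZ : ℂ) = 0 := by
    have := congrArg σ hrel
    rw [map_add, map_add, map_mul, map_pow, map_zero] at this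
    rw [map_intCast, map_intCast] at this
    exact this
  obtain ⟨hbm1, haZ1, habsgold⟩ := aux_quadratic_unit hceq hbZ1 hε1 hε2
  have haZsq : aZ ^ 2 = 1 := by rcases haZ1 with h | h <;> rw [h] <;> norm_num
  -- the element δ with δ² = 5
  set δ : F := εF + εF + (aZ : F) with hδ
  have haZsqF : (aZ : F) ^ 2 = 1 := by exact_mod_cast congrArg (Int.cast : ℤ → F) haZsq
  have hbZF : (bZ : F) = -1 := by rw [hbm1]; push_cast; ring
  have hδ2 : δ ^ 2 = 5 := by
    linear_combination (4 : F) * hrel + haZsqF - 4 * hbZF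
  have hδQint : IsIntegral ℚ δ := IsIntegral.of_finite ℚ δ
  have hεL : εF ∈ L := IntermediateField.mem_adjoin_simple_self ℚ εF
  have haZL : ((aZ : F)) ∈ L := by
    rw [show ((aZ : F)) = algebraMap ℚ F ((aZ : ℚ)) by push_cast [eq_ratCast]; ring]
    exact L.algebraMap_mem _
  have hδL : δ ∈ L := L.add_mem (L.add_mem hεL hεL) haZL
  have hLδ : IntermediateField.adjoin ℚ {δ} = L := by
    apply le_antisymm
    · rw [IntermediateField.adjoin_le_iff, Set.singleton_subset_iff]
      exact hδL
    · rw [hL, IntermediateField.adjoin_le_iff, Set.singleton_subset_iff]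
      have hmem : δ ∈ IntermediateField.adjoin ℚ {δ} :=
        IntermediateField.mem_adjoin_simple_self ℚ δ
      have h2 : ((aZ : F)) ∈ IntermediateField.adjoin ℚ {δ} := by
        rw [show ((aZ : F)) = algebraMap ℚ F ((aZ : ℚ)) by push_cast [eq_ratCast]; ring]
        exact (IntermediateField.adjoin ℚ {δ}).algebraMap_mem _
      have h3 : (algebraMap ℚ F (1/2)) ∈ IntermediateField.adjoin ℚ {δ} :=
        (IntermediateField.adjoin ℚ {δ}).algebraMap_mem _
      have hεδ : εF = algebraMap ℚ F (1/2) * (δ - (aZ : F)) := by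
        rw [eq_ratCast]
        push_cast
        rw [hδ]
        ring
      rw [hεδ]
      exact (IntermediateField.adjoin ℚ {δ}).mul_mem h3
        ((IntermediateField.adjoin ℚ {δ}).sub_mem hmem h2)
  -- minpoly of δ is X² - 5
  have hmpδ : minpoly ℚ δ = Polynomial.X ^ 2 - Polynomial.C (5 : ℚ) := by
    apply aux_monic_eq_of_dvd (minpoly.monic hδQint) (Polynomial.monic_X_pow_sub_C _ (by norm_num))
    · apply minpoly.dvd
      simp only [map_sub, map_pow, Polynomial.aeval_X, Polynomial.aeval_C]
      rw [hδ2, eq_ratCast]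
      push_cast
      ring
    · rw [Polynomial.natDegree_X_pow_sub_C, ← IntermediateField.adjoin.finrank hδQint]
      have : (IntermediateField.adjoin ℚ {δ} : IntermediateField ℚ F) = L := hLδ
      rw [this]
      exact hd2
  -- minpoly of √5 is X² - 5
  have hs5Qint : IsIntegral ℚ (Real.sqrt 5) := by
    refine ⟨Polynomial.X ^ 2 - Polynomial.C (5 : ℚ),
      Polynomial.monic_X_pow_sub_C _ (by norm_num), ?_⟩
    simp only [Polynomial.eval₂_sub, Polynomial.eval₂_X_pow, Polynomial.eval₂_C]
    rw [Real.sq_sqrt (by norm_num : (0:ℝ) ≤ 5)]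
    norm_num

  have hmps5 : minpoly ℚ (Real.sqrt 5) = Polynomial.X ^ 2 - Polynomial.C (5 : ℚ) := by
    have hdvd : minpoly ℚ (Real.sqrt 5) ∣ Polynomial.X ^ 2 - Polynomial.C (5 : ℚ) := by
      apply minpoly.dvd
      simp only [map_sub, map_pow, Polynomial.aeval_X, Polynomial.aeval_C]
      rw [show (algebraMap ℚ ℝ) (5:ℚ) = (5:ℝ) by norm_num,
        Real.sq_sqrt (by norm_num : (0:ℝ) ≤ 5)]
      ring
    apply aux_monic_eq_of_dvd (minpoly.monic hs5Qint)
      (Polynomial.monic_X_pow_sub_C _ (by norm_num)) hdvd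
    have hle : (minpoly ℚ (Real.sqrt 5)).natDegree ≤ 2 := by
      have := Polynomial.natDegree_le_of_dvd hdvd
        (Polynomial.monic_X_pow_sub_C (5:ℚ) (by norm_num : 2 ≠ 0)).ne_zero
      simpa [Polynomial.natDegree_X_pow_sub_C] using this
    have hpos : 0 < (minpoly ℚ (Real.sqrt 5)).natDegree := minpoly.natDegree_pos hs5Qint
    have hne1 : (minpoly ℚ (Real.sqrt 5)).natDegree ≠ 1 := by
      intro h1
      have hdeg1 : (minpoly ℚ (Real.sqrt 5)).degree = 1 := by
        rw [Polynomial.degree_eq_natDegree (minpoly.ne_zero hs5Qint), h1]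
        rfl
      obtain ⟨r, hr⟩ := RingHom.mem_range.mp (minpoly.degree_eq_one_iff.mp hdeg1)
      have h5 : Irrational (Real.sqrt 5) := (by norm_num : Nat.Prime 5).irrational_sqrt
      exact h5 ⟨r, by rw [← hr, eq_ratCast]⟩
    rw [Polynomial.natDegree_X_pow_sub_C]
    omega
  -- all complex embeddings of F are non-real
  have hcx : ∀ φ : F →+* ℂ, ¬ComplexEmbedding.IsReal φ := by
    intro φ hre
    obtain ⟨z, hz⟩ := hKim (φ.comp (algebraMap K F))
    have hcong := RingHom.congr_fun (ComplexEmbedding.isReal_iff.mp hre) (algebraMap K F z)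
    rw [ComplexEmbedding.conjugate_coe_eq] at hcong
    exact hz (Complex.conj_eq_iff_im.mp hcong)
  have hAbsN : ∀ z : F, absN σ σ' z = |(Algebra.norm ℚ z : ℚ)| := fun z =>
    aux_absnorm hquartic hcx hplaces z
  -- no elements of norm ±2, ±3
  have hnorm23 : ∀ (x : 𝓞 F) (m : ℤ), algebraMap ℤ ℚ m = Algebra.norm ℚ (x : F) →
      (m = 2 ∨ m = -2 ∨ m = 3 ∨ m = -3) → False := by
    intro x m hm hmval
    haveI : FiniteDimensional ↥L F := FiniteDimensional.right ℚ ↥L F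
    set y : ↥L := Algebra.norm ↥L ((x : 𝓞 F) : F) with hy
    have hxint : IsIntegral ℤ ((x : 𝓞 F) : F) := x.isIntegral_coe
    have hyint : IsIntegral ℤ y := Algebra.isIntegral_norm (K := ↥L) hxint
    set dL : ↥L := ⟨δ, hδL⟩ with hdLdef
    have hdL2 : dL ^ 2 = 5 := by
      apply Subtype.ext
      push_cast
      exact hδ2
    have hdLint : IsIntegral ℤ dL := by
      rw [← isIntegral_algebraMap_iff (algebraMap (↥L) F).injective]
      have hmap : algebraMap (↥L) F dL = δ := rfl
      rw [hmap]
      have haZint : IsIntegral ℤ ((aZ : F)) := by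
        rw [show ((aZ : F)) = algebraMap ℤ F aZ from (eq_intCast (algebraMap ℤ F) aZ).symm]
        exact isIntegral_algebraMap
      exact (hεint.add hεint).add haZint
    have hmL : ((m : ℚ) : ↥L) = algebraMap ℚ ↥L (Algebra.norm ℚ y) := by
      rw [hy, Algebra.norm_norm, ← hm, eq_ratCast]
      exact congrArg (fun q : ℚ => (q : ↥L)) (eq_intCast (algebraMap ℤ ℚ) m).symm
    obtain ⟨u, v, huv⟩ := aux_norm_form hd2 hdL2 hdLint hyint hmL
    exact aux_no23 huv hmval
  refine ⟨hd2, ?_, habsgold, ?_⟩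
  · -- the isomorphism with ℚ(√5)
    have e0 : (↥L) ≃ₐ[ℚ] ↥(IntermediateField.adjoin ℚ {δ}) :=
      IntermediateField.equivOfEq hLδ.symm
    have e1 : AdjoinRoot (minpoly ℚ δ) ≃ₐ[ℚ] ↥(IntermediateField.adjoin ℚ {δ}) :=
      IntermediateField.adjoinRootEquivAdjoin ℚ hδQint
    have e2 : AdjoinRoot (minpoly ℚ δ) ≃ₐ[ℚ] ↥(IntermediateField.adjoin ℚ {Real.sqrt 5}) := by
      rw [hmpδ, ← hmps5]
      exact IntermediateField.adjoinRootEquivAdjoin ℚ hs5Qint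
    exact ⟨e0.trans (e1.symm.trans e2)⟩
  · intro x
    constructor
    · intro habs
      rw [hAbsN] at habs
      have hnint : IsIntegral ℤ (Algebra.norm ℚ ((x : 𝓞 F) : F)) :=
        Algebra.isIntegral_norm (K := ℚ) x.isIntegral_coe
      obtain ⟨m, hm⟩ := IsIntegrallyClosed.isIntegral_iff.mp hnint
      have habs' : |Algebra.norm ℚ ((x : 𝓞 F) : F)| = (2:ℚ) := by exact_mod_cast habs
      have hmabs : |m| = 2 := by
        have : |(m : ℚ)| = 2 := by rw [show ((m:ℤ):ℚ) = algebraMap ℤ ℚ m from rfl, hm]; exact habs'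
        exact_mod_cast this
      exact hnorm23 x m hm (by rcases abs_eq (by norm_num : (0:ℤ) ≤ 2) |>.mp hmabs with h | h <;> omega)
    · intro habs
      rw [hAbsN] at habs
      have hnint : IsIntegral ℤ (Algebra.norm ℚ ((x : 𝓞 F) : F)) :=
        Algebra.isIntegral_norm (K := ℚ) x.isIntegral_coe
      obtain ⟨m, hm⟩ := IsIntegrallyClosed.isIntegral_iff.mp hnint
      have habs' : |Algebra.norm ℚ ((x : 𝓞 F) : F)| = (3:ℚ) := by exact_mod_cast habs
      have hmabs : |m| = 3 := by
        have : |(m : ℚ)| = 3 := by rw [show ((m:ℤ):ℚ) = algebraMap ℤ ℚ m from rfl, hm]; exact habs'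
        exact_mod_cast this
      exact hnorm23 x m hm (by rcases abs_eq (by norm_num : (0:ℤ) ≤ 3) |>.mp hmabs with h | h <;> omega)
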